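/- Let T = diag(t_1,…,t_p) with t_j ≥ 0, let Z = diag(z_1,…,z_p) with z_j = (1 + w_j^{-2} t_j)^{-1} for a nonsingular diagonal W = diag(w_1,…,w_p), and let R = W^{-2} + a aᵀ be nonsingular with b = W a and U = I_p − Z. Then T (I_p + R T)^{-1} = T Z (I_p − (1 + bᵀ U b)^{-1} W^{-1} b bᵀ W^{-1} T Z), provided 1 + bᵀ U b ≠ 0. -/

import Mathlib

open Matrix

lemma vmv_sandwich {p : ℕ} (a : Fin p → ℝ) (M : Matrix (Fin p) (Fin p) ℝ) :
    Matrix.vecMulVec a a * M * Matrix.vecMulVec a a =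
      (a ⬝ᵥ M.mulVec a) • Matrix.vecMulVec a a := by
  ext i j
  simp [Matrix.mul_apply, Matrix.vecMulVec_apply, dotProduct, Matrix.mulVec,
    Finset.mul_sum, Finset.sum_mul]
  rw [Finset.sum_comm]
  congr 1; ext k; congr 1; ext l; ring

theorem stmt1 {p : ℕ} (w t : Fin p → ℝ) (hw : ∀ j, w j ≠ 0) (ht : ∀ j, 0 ≤ t j)
    (a : Fin p → ℝ)
    (W T Z U R : Matrix (Fin p) (Fin p) ℝ)
    (hW : W = Matrix.diagonal w)
    (hT : T = Matrix.diagonal t)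
    (hZ : Z = Matrix.diagonal fun j => (1 + ((w j)⁻¹ ^ 2) * t j)⁻¹)
    (hU : U = 1 - Z)
    (hR : R = (Matrix.diagonal fun j => (w j)⁻¹ ^ 2) + Matrix.vecMulVec a a)
    (hRns : IsUnit R.det)
    (hIRT : IsUnit (1 + R * T).det)
    (b : Fin p → ℝ) (hb : b = W.mulVec a)
    (hq : 1 + b ⬝ᵥ U.mulVec b ≠ 0) :
    T * (1 + R * T)⁻¹ =
      T * Z * (1 - (1 + b ⬝ᵥ U.mulVec b)⁻¹ •
        (W⁻¹ * Matrix.vecMulVec b b * W⁻¹ * T * Z)) := by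
  set D : Matrix (Fin p) (Fin p) ℝ := Matrix.diagonal fun j => (w j)⁻¹ ^ 2 with hD
  set A : Matrix (Fin p) (Fin p) ℝ := Matrix.vecMulVec a a with hA
  have hden : ∀ j, (1 + ((w j)⁻¹ ^ 2) * t j) ≠ 0 := by
    intro j
    have : 0 ≤ ((w j)⁻¹ ^ 2) * t j := mul_nonneg (sq_nonneg _) (ht j)
    linarith
  -- Z * (1 + D * T) = 1
  have h1DT : (1 : Matrix (Fin p) (Fin p) ℝ) + D * T
      = Matrix.diagonal (fun j => 1 + (w j)⁻¹ ^ 2 * t j) := by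
    rw [hD, hT, Matrix.diagonal_mul_diagonal, ← Matrix.diagonal_one, Matrix.diagonal_add]
  have hZinv : Z * (1 + D * T) = 1 := by
    rw [hZ, h1DT, Matrix.diagonal_mul_diagonal, ← Matrix.diagonal_one]
    ext i j
    rcases eq_or_ne i j with h | h
    · subst h
      have h' := hden i
      rw [inv_pow] at h'
      simp [inv_mul_cancel₀ h']
    · simp [Matrix.diagonal_apply_ne _ h]
  -- scalar identity: b ⬝ᵥ U b = a ⬝ᵥ (T*Z) a
  have hs : b ⬝ᵥ U.mulVec b = a ⬝ᵥ (T * Z).mulVec a := by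
    rw [hb, hU, hW, hT, hZ, Matrix.diagonal_mul_diagonal, Matrix.sub_mulVec,
      Matrix.one_mulVec]
    simp only [Matrix.mulVec_diagonal, dotProduct, Pi.sub_apply]
    apply Finset.sum_congr rfl
    intro j _
    have h1 : (1 : ℝ) + t j * (w j)⁻¹ ^ 2 ≠ 0 := by rw [mul_comm]; exact hden j
    have h2 := hden j
    have h3 := hw j
    have h4 : (0:ℝ) < w j ^ 2 + t j := by
      have := ht j
      positivity
    have h5 := h4.ne'
    field_simp
    ring
  set s : ℝ := a ⬝ᵥ (T * Z).mulVec a with hsdef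
  set c : ℝ := 1 + b ⬝ᵥ U.mulVec b with hc
  have hcs : c = 1 + s := by rw [hc, hs]
  have hWdet : IsUnit W.det := by
    rw [hW, Matrix.det_diagonal]
    exact (Finset.prod_ne_zero_iff.mpr fun j _ => hw j).isUnit
  have hWinv : W⁻¹ * W = 1 := Matrix.nonsing_inv_mul W hWdet
  have hbb : Matrix.vecMulVec b b = W * A * W := by
    rw [hb, hW, hA]
    ext i j
    simp [Matrix.vecMulVec_apply, Matrix.mulVec_diagonal, Matrix.diagonal_mul,
      Matrix.mul_diagonal]
    ring
  have hWA : W⁻¹ * Matrix.vecMulVec b b * W⁻¹ = A := by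
    rw [hbb]
    have hWW : W * W⁻¹ = 1 := Matrix.mul_nonsing_inv W hWdet
    calc W⁻¹ * (W * A * W) * W⁻¹ = (W⁻¹ * W) * A * (W * W⁻¹) := by
          noncomm_ring
      _ = A := by rw [hWinv, hWW, Matrix.one_mul, Matrix.mul_one]
  rw [hWA]
  have : Invertible (1 + R * T) := (1 + R * T).invertibleOfIsUnitDet hIRT
  rw [Matrix.mul_inv_eq_iff_eq_mul_of_invertible]
  have hdecomp : 1 + R * T = (1 + D * T) + A * T := by
    rw [hR]; noncomm_ring
  rw [hdecomp]
  have key1 : T * Z * (1 + D * T) = T := by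
    rw [Matrix.mul_assoc, hZinv, Matrix.mul_one]
  have key2 : A * (T * Z) * A = s • A := vmv_sandwich a (T * Z)
  have expand : T * Z * (1 - c⁻¹ • (A * T * Z)) * ((1 + D * T) + A * T)
      = T + (1 - c⁻¹ - c⁻¹ * s) • (T * Z * A * T) := by
    have e1 : T * Z * (1 - c⁻¹ • (A * T * Z)) * ((1 + D * T) + A * T)
        = T * Z * (1 + D * T) + T * Z * A * T
          - c⁻¹ • (T * Z * (A * T * Z) * (1 + D * T))
          - c⁻¹ • (T * Z * (A * T * Z) * (A * T)) := by
      simp only [Matrix.mul_sub, Matrix.sub_mul, Matrix.mul_add, Matrix.add_mul,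
        Matrix.mul_one, Matrix.one_mul, Matrix.mul_smul, Matrix.smul_mul]
      noncomm_ring
      simp only [smul_add]
      abel
    rw [e1, key1]
    have e2 : T * Z * (A * T * Z) * (1 + D * T) = T * Z * A * T := by
      calc T * Z * (A * T * Z) * (1 + D * T)
          = T * Z * A * (T * Z * (1 + D * T)) := by noncomm_ring
        _ = T * Z * A * T := by rw [key1]
    have e3 : T * Z * (A * T * Z) * (A * T) = s • (T * Z * A * T) := by
      calc T * Z * (A * T * Z) * (A * T)
          = T * Z * (A * (T * Z) * A) * T := by noncomm_ring
        _ = T * Z * (s • A) * T := by rw [key2]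
        _ = s • (T * Z * A * T) := by
            simp only [Matrix.mul_smul, Matrix.smul_mul]
    rw [e2, e3]
    simp only [sub_smul, smul_smul, one_smul]
    abel
  rw [expand]
  have hz : (1 - c⁻¹ - c⁻¹ * s) = 0 := by
    rw [hcs] at hq ⊢
    field_simp
    ring
  rw [hz, zero_smul, add_zero]
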